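/- For every integer g ≥ 2, V1(g) > √(2/(3πg)) · (8/3)^{4g−4} · (1 − 2/(6g−7)). (Since V1(g) = Vol(Γ₁(g)) is one of the non-negative contributions summing to the Masur–Veech volume Vol 𝒬_{g,0}, this yields the paper's lower bound Vol 𝒬_{g,0} > √(2/(3πg))·(8/3)^{4g−4}·(1 − 2/(6g−7)).) -/

import Mathlib

open Nat Real Filter


/-- The piecewise quantity `D(g,k)` from the recurrence for normalized
2-correlators: `D(g,k)` depends on the residue of `k` mod 3, with `k = 3j-1`,
`k = 3j`, or `k = 3j+1` respectively. -/
noncomputable def Dterm (g k : ℕ) : ℚ :=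
  if k % 3 = 2 then
    -- k = 3j - 1, with j = (k+1)/3
    ((6 * ((k + 1) / 3) - 1)‼ : ℚ) / (((k + 1) / 3)! : ℚ) *
      (((g - 1)! : ℚ) / ((g - (k + 1) / 3)! : ℚ)) * ((g : ℚ) - 2 * ((k + 1) / 3))
  else if k % 3 = 0 then
    -- k = 3j, with j = k/3
    -2 * ((6 * (k / 3) + 1)‼ : ℚ) / ((k / 3)! : ℚ) *
      (((g - 1)! : ℚ) / ((g - 1 - k / 3)! : ℚ))
  else
    -- k = 3j + 1, with j = (k-1)/3
    2 * ((6 * ((k - 1) / 3) + 3)‼ : ℚ) / (((k - 1) / 3)! : ℚ) *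
      (((g - 1)! : ℚ) / ((g - 1 - (k - 1) / 3)! : ℚ))

/-- `a : ℕ → ℚ` is the sequence `(a_{g,k})_{0 ≤ k ≤ 3g-1}` of normalized
2-correlators: `a 0 = 1`, the recurrence
`a (k+1) - a k = ((6g-3-2k)‼/(6g-1)‼) · D(g,k)` for `0 ≤ k ≤ ⌊(3g-1)/2⌋ - 1`,
and the symmetry `a k = a (3g-1-k)` for `0 ≤ k ≤ 3g-1`. -/
def IsCorr (g : ℕ) (a : ℕ → ℚ) : Prop :=
  a 0 = 1 ∧
  (∀ k : ℕ, k + 1 ≤ (3 * g - 1) / 2 →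
    a (k + 1) - a k = ((6 * g - 3 - 2 * k)‼ : ℚ) / ((6 * g - 1)‼ : ℚ) * Dterm g k) ∧
  (∀ k : ℕ, k ≤ 3 * g - 1 → a k = a (3 * g - 1 - k))

/-- `R(g,j) = C(3g,3j)·C(g,j)/C(6g,6j)`. -/
noncomputable def R (g j : ℕ) : ℚ :=
  (((3 * g).choose (3 * j) : ℚ) * (g.choose j : ℚ)) / ((6 * g).choose (6 * j) : ℚ)

/-- Riemann zeta value `ζ(s) = Σ_{n ≥ 1} n⁻ˢ` as a real number. -/
noncomputable def zetaR (s : ℕ) : ℝ := ∑' n : ℕ, (1 : ℝ) / (n + 1) ^ s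

/-- `V1(g) = Vol(Γ₁(g))`, the contribution of one-cylinder square-tiled
surfaces with nonseparating waist curve to the Masur–Veech volume `Vol 𝒬_g`,
expressed via the sequence `a` of normalized 2-correlators. -/
noncomputable def V1 (a : ℕ → ℕ → ℚ) (g : ℕ) : ℝ :=
  zetaR (6 * g - 6) * ((4 * g - 4).choose (g - 1) : ℝ) *
    (2 / (3 ^ (g - 1) * 2 ^ (2 * g - 2))) *
    ∑ k ∈ Finset.range (3 * g - 3), ((6 * g - 6).choose (2 * k + 1) : ℝ) * (a (g - 1) k : ℝ)

/-- `S(g) = Σ_{g₁=1}^{g-1} C(g,g₁)·C(3g-4,3g₁-2)`. -/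
def S (g : ℕ) : ℕ :=
  ∑ g₁ ∈ Finset.Icc 1 (g - 1), g.choose g₁ * (3 * g - 4).choose (3 * g₁ - 2)

/-- `W(g) = 2·ζ(6g-6)·C(4g-4,g)·12⁻ᵍ·S(g)`, the total contribution of
one-cylinder square-tiled surfaces with separating waist curve. -/
noncomputable def W (g : ℕ) : ℝ :=
  2 * zetaR (6 * g - 6) * ((4 * g - 4).choose g : ℝ) * (12 : ℝ)⁻¹ ^ g * (S g : ℝ)


open Stirling Topology

lemma Dterm_zero (g : ℕ) : Dterm g 0 = -2 := by
  rw [Dterm, if_neg (by omega), if_pos rfl]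
  have h : ((g-1)! : ℚ) ≠ 0 := by positivity
  simp [Nat.doubleFactorial]
  exact Nat.factorial_ne_zero _

lemma delta1_nonneg (g j : ℕ) :
    0 ≤ ((6 * g - 3 - 2 * (3 * j + 1))‼ : ℚ) / ((6 * g - 1)‼ : ℚ) * Dterm g (3 * j + 1) := by
  rw [Dterm, if_neg (by omega), if_neg (by omega)]
  simp only [show (3 * j + 1 - 1) / 3 = j from by omega]
  positivity

lemma delta2_nonneg (g j : ℕ) (hg : 2 * j + 3 ≤ g) :
    0 ≤ ((6 * g - 3 - 2 * (3 * j + 2))‼ : ℚ) / ((6 * g - 1)‼ : ℚ) * Dterm g (3 * j + 2) := by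
  rw [Dterm, if_pos (by omega)]
  simp only [show (3 * j + 2 + 1) / 3 = j + 1 from by omega]
  have hb : (0:ℚ) ≤ (g : ℚ) - 2 * ((((3 * j + 2 : ℕ) : ℚ) + 1) / 3) := by
    have : ((2 * j + 3 : ℕ) : ℚ) ≤ (g : ℚ) := by exact_mod_cast hg
    push_cast at this ⊢
    linarith
  refine mul_nonneg (by positivity) (mul_nonneg (by positivity) hb)

lemma delta_triple (g j : ℕ) (hg : 2 * j + 3 ≤ g) :
    0 ≤ ((6 * g - 3 - 2 * (3 * j + 1))‼ : ℚ) / ((6 * g - 1)‼ : ℚ) * Dterm g (3 * j + 1)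
      + ((6 * g - 3 - 2 * (3 * j + 2))‼ : ℚ) / ((6 * g - 1)‼ : ℚ) * Dterm g (3 * j + 2)
      + ((6 * g - 3 - 2 * (3 * j + 3))‼ : ℚ) / ((6 * g - 1)‼ : ℚ) * Dterm g (3 * j + 3) := by
  obtain ⟨t, rfl⟩ : ∃ t, g = 2 * j + 3 + t := ⟨g - (2 * j + 3), by omega⟩
  -- atoms
  set A : ℚ := ((6 * (j + t) + 9)‼ : ℚ) with hA
  set B : ℚ := ((6 * j + 3)‼ : ℚ) with hB
  set C : ℚ := ((2 * j + t + 2)! : ℚ) with hC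
  set E : ℚ := ((j + t + 1)! : ℚ) with hE
  set F : ℚ := (j ! : ℚ) with hF
  set N : ℚ := ((6 * (2 * j + 3 + t) - 1)‼ : ℚ) with hN
  have e13 : ((6 * (j + t) + 13)‼ : ℚ)
      = (6 * (j : ℚ) + 6 * t + 13) * (6 * (j : ℚ) + 6 * t + 11) * A := by
    rw [hA, show 6 * (j + t) + 13 = 6 * (j + t) + 9 + 2 + 2 from by omega,
      Nat.doubleFactorial_add_two, Nat.doubleFactorial_add_two]
    push_cast; ring
  have e11 : ((6 * (j + t) + 11)‼ : ℚ) = (6 * (j : ℚ) + 6 * t + 11) * A := by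
    rw [hA, show 6 * (j + t) + 11 = 6 * (j + t) + 9 + 2 from by omega,
      Nat.doubleFactorial_add_two]
    push_cast; ring
  have e5 : ((6 * j + 5)‼ : ℚ) = (6 * (j : ℚ) + 5) * B := by
    rw [hB, show 6 * j + 5 = 6 * j + 3 + 2 from by omega, Nat.doubleFactorial_add_two]
    push_cast; ring
  have e7 : ((6 * j + 7)‼ : ℚ) = (6 * (j : ℚ) + 7) * (6 * (j : ℚ) + 5) * B := by
    rw [hB, show 6 * j + 7 = 6 * j + 3 + 2 + 2 from by omega,
      Nat.doubleFactorial_add_two, Nat.doubleFactorial_add_two]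
    push_cast; ring
  have f1 : (((j + t + 2))! : ℚ) = ((j : ℚ) + t + 2) * E := by
    rw [hE, show j + t + 2 = (j + t + 1) + 1 from by omega, Nat.factorial_succ]
    push_cast; ring
  have f2 : (((j + 1))! : ℚ) = ((j : ℚ) + 1) * F := by
    rw [hF, Nat.factorial_succ]; push_cast; ring
  have hD1 : Dterm (2 * j + 3 + t) (3 * j + 1) = 2 * B / F * (C / (((j : ℚ) + t + 2) * E)) := by
    rw [Dterm, if_neg (by omega), if_neg (by omega)]
    simp only [show (3 * j + 1 - 1) / 3 = j from by omega,
      show 2 * j + 3 + t - 1 = 2 * j + t + 2 from by omega,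
      show 2 * j + 3 + t - 1 - j = j + t + 2 from by omega,
      show 2 * j + t + 2 - j = j + t + 2 from by omega, f1]
    rfl
  have hD2 : Dterm (2 * j + 3 + t) (3 * j + 2)
      = (6 * (j : ℚ) + 5) * B / (((j : ℚ) + 1) * F) * (C / (((j : ℚ) + t + 2) * E))
        * ((t : ℚ) + 1) := by
    rw [Dterm, if_pos (by omega)]
    simp only [show (3 * j + 2 + 1) / 3 = j + 1 from by omega,
      show 6 * (j + 1) - 1 = 6 * j + 5 from by omega,
      show 2 * j + 3 + t - 1 = 2 * j + t + 2 from by omega,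
      show 2 * j + 3 + t - (j + 1) = j + t + 2 from by omega, e5, f1, f2]
    push_cast; ring
  have hD3 : Dterm (2 * j + 3 + t) (3 * j + 3)
      = -2 * ((6 * (j : ℚ) + 7) * (6 * (j : ℚ) + 5) * B) / (((j : ℚ) + 1) * F) * (C / E) := by
    rw [Dterm, if_neg (by omega), if_pos (by omega)]
    simp only [show (3 * j + 3) / 3 = j + 1 from by omega,
      show 6 * (j + 1) + 1 = 6 * j + 7 from by omega,
      show 2 * j + 3 + t - 1 = 2 * j + t + 2 from by omega,
      show 2 * j + 3 + t - 1 - (j + 1) = j + t + 1 from by omega,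
      show 2 * j + t + 2 - (j + 1) = j + t + 1 from by omega, e7, f2]
    rfl
  have hP1 : (6 * (2 * j + 3 + t) - 3 - 2 * (3 * j + 1)) = 6 * (j + t) + 13 := by omega
  have hP2 : (6 * (2 * j + 3 + t) - 3 - 2 * (3 * j + 2)) = 6 * (j + t) + 11 := by omega
  have hP3 : (6 * (2 * j + 3 + t) - 3 - 2 * (3 * j + 3)) = 6 * (j + t) + 9 := by omega
  rw [hD1, hD2, hD3, hP1, hP2, hP3, e13, e11, ← hA]
  have hApos : 0 < A := by rw [hA]; positivity
  have hBpos : 0 < B := by rw [hB]; positivity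
  have hCpos : 0 < C := by rw [hC]; positivity
  have hEpos : 0 < E := by rw [hE]; positivity
  have hFpos : 0 < F := by rw [hF]; positivity
  have hNpos : 0 < N := by rw [hN]; positivity
  have key : (6 * (j : ℚ) + 6 * t + 13) * (6 * (j : ℚ) + 6 * t + 11) * A / N
        * (2 * B / F * (C / (((j : ℚ) + t + 2) * E)))
      + (6 * (j : ℚ) + 6 * t + 11) * A / N
        * ((6 * (j : ℚ) + 5) * B / (((j : ℚ) + 1) * F) * (C / (((j : ℚ) + t + 2) * E))
          * ((t : ℚ) + 1))
      + A / N * (-2 * ((6 * (j : ℚ) + 7) * (6 * (j : ℚ) + 5) * B) / (((j : ℚ) + 1) * F)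
          * (C / E))
      = A * B * C * (201 + 303 * (t : ℚ) + 102 * (t : ℚ) ^ 2 + 312 * (j : ℚ)
          + 420 * (j : ℚ) * (t : ℚ) + 108 * (j : ℚ) * (t : ℚ) ^ 2 + 108 * (j : ℚ) ^ 2
          + 108 * (j : ℚ) ^ 2 * (t : ℚ))
        / (N * F * E * ((j : ℚ) + 1) * ((j : ℚ) + t + 2)) := by
    field_simp
    ring
  rw [key]
  positivity

lemma corr_lower (g : ℕ) (hg : 1 ≤ g) (a : ℕ → ℚ) (h : IsCorr g a) :
    ∀ k, k ≤ 3 * g - 1 → 1 - 2 / (6 * (g : ℚ) - 1) ≤ a k := by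
  obtain ⟨h0, hrec, hsym⟩ := h
  have hm : (3 * g - 1) / 2 = (3 * g - 1) / 2 := rfl
  have hgq : (1 : ℚ) ≤ (g : ℚ) := by exact_mod_cast hg
  have hg6 : (0:ℚ) < 6 * (g : ℚ) - 1 := by linarith
  -- value of a 1
  have ha1 : a 1 = 1 - 2 / (6 * (g : ℚ) - 1) := by
    have hr := hrec 0 (by omega)
    rw [h0, Dterm_zero] at hr
    obtain ⟨p, rfl⟩ : ∃ p, g = p + 1 := ⟨g - 1, by omega⟩
    have hpre : ((6 * (p + 1) - 3 - 2 * 0)‼ : ℚ) / ((6 * (p + 1) - 1)‼ : ℚ)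
        = 1 / (6 * ((p : ℚ) + 1) - 1) := by
      have h1 : 6 * (p + 1) - 3 - 2 * 0 = 6 * p + 3 := by omega
      have h2 : 6 * (p + 1) - 1 = 6 * p + 3 + 2 := by omega
      have hd : (6 * p + 3 + 2)‼ = (6 * p + 3 + 2) * (6 * p + 3)‼ :=
        Nat.doubleFactorial_add_two _
      rw [h1, h2, hd]
      have hne : ((6 * p + 3)‼ : ℚ) ≠ 0 := by positivity
      have hc : ((6 * p + 3 + 2 : ℕ) : ℚ) = 6 * ((p : ℚ) + 1) - 1 := by push_cast; ring
      rw [Nat.cast_mul, hc, div_mul_eq_div_div_swap, div_self hne]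
    rw [hpre] at hr
    push_cast at hr ⊢
    have : (6 * ((p:ℚ) + 1) - 1) ≠ 0 := by push_cast at hg6 ⊢; linarith
    field_simp at hr ⊢
    linarith
  have step1 : ∀ j, 3 * j + 1 + 1 ≤ (3 * g - 1) / 2 → a (3 * j + 1) ≤ a (3 * j + 1 + 1) := by
    intro j hj
    have hr := hrec (3 * j + 1) hj
    have := delta1_nonneg g j
    linarith
  have step2 : ∀ j, 3 * j + 2 + 1 ≤ (3 * g - 1) / 2 → a (3 * j + 2) ≤ a (3 * j + 2 + 1) := by
    intro j hj
    have hr := hrec (3 * j + 2) hj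
    have := delta2_nonneg g j (by omega)
    linarith
  have step3 : ∀ j, 3 * j + 3 + 1 ≤ (3 * g - 1) / 2 → a (3 * j + 1) ≤ a (3 * j + 4) := by
    intro j hj
    have hr1 := hrec (3 * j + 1) (by omega)
    have hr2 := hrec (3 * j + 2) (by omega)
    have hr3 := hrec (3 * j + 3) (by omega)
    have := delta_triple g j (by omega)
    have e1 : 3 * j + 1 + 1 = 3 * j + 2 := by omega
    have e2 : 3 * j + 2 + 1 = 3 * j + 3 := by omega
    have e3 : 3 * j + 3 + 1 = 3 * j + 4 := by omega
    rw [e1] at hr1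
    rw [e2] at hr2
    rw [e3] at hr3
    linarith
  have main : ∀ j, 3 * j + 1 ≤ (3 * g - 1) / 2 → 1 - 2 / (6 * (g : ℚ) - 1) ≤ a (3 * j + 1) := by
    intro j
    induction j with
    | zero => intro _; simpa using ha1.ge
    | succ n ih =>
      intro hj
      have h34 : 3 * (n + 1) + 1 = 3 * n + 4 := by omega
      rw [h34]
      calc 1 - 2 / (6 * (g : ℚ) - 1) ≤ a (3 * n + 1) := ih (by omega)
        _ ≤ a (3 * n + 4) := step3 n (by omega)
  have half : ∀ k, k ≤ (3 * g - 1) / 2 → 1 - 2 / (6 * (g : ℚ) - 1) ≤ a k := by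
    intro k hk
    rcases Nat.eq_zero_or_pos k with rfl | hk0
    · rw [h0]
      have : 0 < 2 / (6 * (g : ℚ) - 1) := by positivity
      linarith
    · obtain ⟨j, r, hr3, rfl⟩ : ∃ j r, r < 3 ∧ k = 3 * j + 1 + r :=
        ⟨(k - 1) / 3, (k - 1) % 3, by omega, by omega⟩
      interval_cases r
      · simpa using main j (by omega)
      · have e : 3 * j + 1 + 1 = 3 * j + 2 := by omega
        calc 1 - 2 / (6 * (g : ℚ) - 1) ≤ a (3 * j + 1) := main j (by omega)
          _ ≤ a (3 * j + 1 + 1) := step1 j (by omega)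
      · have e1 : 3 * j + 1 + 2 = 3 * j + 2 + 1 := by omega
        rw [e1]
        calc 1 - 2 / (6 * (g : ℚ) - 1) ≤ a (3 * j + 1) := main j (by omega)
          _ ≤ a (3 * j + 1 + 1) := step1 j (by omega)
          _ = a (3 * j + 2) := by norm_num
          _ ≤ a (3 * j + 2 + 1) := step2 j (by omega)
  intro k hk
  by_cases hkm : k ≤ (3 * g - 1) / 2
  · exact half k hkm
  · rw [hsym k hk]
    exact half _ (by omega)

lemma sum_range_two_mul' (f : ℕ → ℝ) (n : ℕ) :
    ∑ i ∈ Finset.range (2 * n), f i = ∑ k ∈ Finset.range n, (f (2 * k) + f (2 * k + 1)) := by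
  induction n with
  | zero => simp
  | succ n ih =>
    rw [show 2 * (n + 1) = 2 * n + 1 + 1 from by ring, Finset.sum_range_succ,
      Finset.sum_range_succ, ih, Finset.sum_range_succ]
    ring

lemma odd_choose_sum (n : ℕ) (hn : 1 ≤ n) :
    ∑ k ∈ Finset.range n, ((2 * n).choose (2 * k + 1) : ℝ) = 2 ^ (2 * n - 1) := by
  have h1 : ∑ i ∈ Finset.range (2 * n + 1), ((2 * n).choose i : ℝ) = 2 ^ (2 * n) := by
    exact_mod_cast congrArg (fun x : ℕ => (x : ℝ)) (Nat.sum_range_choose (2 * n))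
  have h2 : ∑ i ∈ Finset.range (2 * n + 1), (-1 : ℝ) ^ i * ((2 * n).choose i) = 0 := by
    have h := Int.alternating_sum_range_choose (n := 2 * n)
    rw [if_neg (by omega)] at h
    exact_mod_cast congrArg (fun x : ℤ => (x : ℝ)) h
  have h3 : ∑ i ∈ Finset.range (2 * n + 1),
      (((2 * n).choose i : ℝ) - (-1) ^ i * ((2 * n).choose i)) = 2 ^ (2 * n) := by
    rw [Finset.sum_sub_distrib, h1, h2, sub_zero]
  rw [Finset.sum_range_succ, sum_range_two_mul'] at h3
  have h4 : ∀ k : ℕ, (((2 * n).choose (2 * k) : ℝ) - (-1) ^ (2 * k) * ((2 * n).choose (2 * k)))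
      + (((2 * n).choose (2 * k + 1) : ℝ) - (-1) ^ (2 * k + 1) * ((2 * n).choose (2 * k + 1)))
      = 2 * ((2 * n).choose (2 * k + 1) : ℝ) := by
    intro k
    rw [pow_succ, pow_mul]
    norm_num
    ring
  rw [Finset.sum_congr rfl (fun k _ => h4 k)] at h3
  have h5 : ((-1 : ℝ)) ^ (2 * n) = 1 := by rw [pow_mul]; norm_num
  rw [h5] at h3
  have h6 : (2 : ℝ) ^ (2 * n) = 2 * 2 ^ (2 * n - 1) := by
    conv_lhs => rw [show 2 * n = (2 * n - 1) + 1 from by omega]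
    rw [pow_succ, mul_comm]
  rw [← Finset.mul_sum] at h3
  have := h3
  nlinarith [this, h6]

lemma one_lt_zetaR' (s : ℕ) (hs : 2 ≤ s) : 1 < ∑' n : ℕ, (1 : ℝ) / (n + 1) ^ s := by
  have hsum : Summable (fun n : ℕ => (1 : ℝ) / ((n : ℝ) + 1) ^ s) := by
    have h := Real.summable_one_div_nat_pow.mpr hs
    have h2 := (summable_nat_add_iff 1).mpr h
    apply h2.congr
    intro n
    push_cast
    ring
  have hle : (1 : ℝ) + 1 / 2 ^ s ≤ ∑' n : ℕ, (1 : ℝ) / (n + 1) ^ s := by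
    have h := Summable.sum_le_tsum (Finset.range 2) (fun i _ => by positivity) hsum
    rw [Finset.sum_range_succ, Finset.sum_range_one] at h
    simp only [one_div] at h ⊢
    norm_num at h ⊢
    convert h using 2
  have : (0 : ℝ) < 1 / 2 ^ s := by positivity
  linarith

noncomputable def eseq (m : ℕ) : ℝ :=
  ((4 * m).choose m : ℝ) * Real.sqrt (m + 1) * (27 / 256) ^ m

lemma choose_succ_identity (m : ℕ) :
    ((4 * (m + 1)).choose (m + 1) : ℝ)
        * (((m : ℝ) + 1) * (3 * m + 1) * (3 * m + 2) * (3 * m + 3))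
      = ((4 * m).choose m : ℝ)
        * ((4 * (m : ℝ) + 1) * (4 * m + 2) * (4 * m + 3) * (4 * m + 4)) := by
  have e1 : ((4 * m).choose m : ℝ) = (4 * m)! / (m ! * (3 * m)!) := by
    rw [Nat.cast_choose ℝ (by omega : m ≤ 4 * m), show 4 * m - m = 3 * m from by omega]
  have e2 : ((4 * (m + 1)).choose (m + 1) : ℝ) = (4 * m + 4)! / ((m + 1)! * (3 * m + 3)!) := by
    rw [show 4 * (m + 1) = 4 * m + 4 from by ring,
      Nat.cast_choose ℝ (by omega : m + 1 ≤ 4 * m + 4),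
      show 4 * m + 4 - (m + 1) = 3 * m + 3 from by omega]
  have f4 : ((4 * m + 4)! : ℝ)
      = (4 * (m : ℝ) + 4) * (4 * m + 3) * (4 * m + 2) * (4 * m + 1) * (4 * m)! := by
    rw [show 4 * m + 4 = (4 * m + 3) + 1 from by omega, Nat.factorial_succ,
      show 4 * m + 3 = (4 * m + 2) + 1 from by omega, Nat.factorial_succ,
      show 4 * m + 2 = (4 * m + 1) + 1 from by omega, Nat.factorial_succ,
      show 4 * m + 1 = (4 * m) + 1 from by omega, Nat.factorial_succ]
    push_cast; ring
  have f1 : ((m + 1)! : ℝ) = ((m : ℝ) + 1) * m ! := by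
    rw [Nat.factorial_succ]; push_cast; ring
  have f3 : ((3 * m + 3)! : ℝ)
      = (3 * (m : ℝ) + 3) * (3 * m + 2) * (3 * m + 1) * (3 * m)! := by
    rw [show 3 * m + 3 = (3 * m + 2) + 1 from by omega, Nat.factorial_succ,
      show 3 * m + 2 = (3 * m + 1) + 1 from by omega, Nat.factorial_succ,
      show 3 * m + 1 = (3 * m) + 1 from by omega, Nat.factorial_succ]
    push_cast; ring
  rw [e1, e2, f4, f1, f3]
  have h1 : (m ! : ℝ) ≠ 0 := by positivity
  have h2 : ((3 * m)! : ℝ) ≠ 0 := by positivity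
  field_simp

lemma eseq_succ_le (m : ℕ) : eseq (m + 1) ≤ eseq m := by
  have hx : (0 : ℝ) ≤ (m : ℝ) := Nat.cast_nonneg m
  have hC : (0 : ℝ) < ((4 * m).choose m : ℝ) := by
    exact_mod_cast Nat.choose_pos (by omega : m ≤ 4 * m)
  have hC' : (0 : ℝ) ≤ ((4 * (m + 1)).choose (m + 1) : ℝ) := Nat.cast_nonneg _
  have hP3 : (0 : ℝ) < ((m : ℝ) + 1) * (3 * m + 1) * (3 * m + 2) * (3 * m + 3) := by positivity
  have poly : (27 * ((4 * (m : ℝ) + 1) * (4 * m + 2) * (4 * m + 3) * (4 * m + 4))) ^ 2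
        * ((m : ℝ) + 2)
      ≤ (256 * (((m : ℝ) + 1) * (3 * m + 1) * (3 * m + 2) * (3 * m + 3))) ^ 2
        * ((m : ℝ) + 1) := by
    nlinarith [hx, pow_nonneg hx 2, pow_nonneg hx 3, pow_nonneg hx 4, pow_nonneg hx 5,
      pow_nonneg hx 6, pow_nonneg hx 7]
  have sqrt_ineq : 27 * ((4 * (m : ℝ) + 1) * (4 * m + 2) * (4 * m + 3) * (4 * m + 4))
        * Real.sqrt ((m : ℝ) + 2)
      ≤ 256 * (((m : ℝ) + 1) * (3 * m + 1) * (3 * m + 2) * (3 * m + 3))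
        * Real.sqrt ((m : ℝ) + 1) := by
    have h1 : 27 * ((4 * (m : ℝ) + 1) * (4 * m + 2) * (4 * m + 3) * (4 * m + 4))
          * Real.sqrt ((m : ℝ) + 2)
        = Real.sqrt ((27 * ((4 * (m : ℝ) + 1) * (4 * m + 2) * (4 * m + 3) * (4 * m + 4))) ^ 2
          * ((m : ℝ) + 2)) := by
      rw [Real.sqrt_mul (by positivity), Real.sqrt_sq (by positivity)]
    have h2 : 256 * (((m : ℝ) + 1) * (3 * m + 1) * (3 * m + 2) * (3 * m + 3))
          * Real.sqrt ((m : ℝ) + 1)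
        = Real.sqrt ((256 * (((m : ℝ) + 1) * (3 * m + 1) * (3 * m + 2) * (3 * m + 3))) ^ 2
          * ((m : ℝ) + 1)) := by
      rw [Real.sqrt_mul (by positivity), Real.sqrt_sq (by positivity)]
    rw [h1, h2]
    exact Real.sqrt_le_sqrt poly
  have hC'eq : ((4 * (m + 1)).choose (m + 1) : ℝ)
      = ((4 * m).choose m : ℝ) * ((4 * (m : ℝ) + 1) * (4 * m + 2) * (4 * m + 3) * (4 * m + 4))
        / (((m : ℝ) + 1) * (3 * m + 1) * (3 * m + 2) * (3 * m + 3)) := by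
    rw [eq_div_iff hP3.ne']
    exact choose_succ_identity m
  have key : ((4 * (m + 1)).choose (m + 1) : ℝ) * Real.sqrt ((m : ℝ) + 2) * 27
      ≤ ((4 * m).choose m : ℝ) * Real.sqrt ((m : ℝ) + 1) * 256 := by
    calc ((4 * (m + 1)).choose (m + 1) : ℝ) * Real.sqrt ((m : ℝ) + 2) * 27
        = ((4 * m).choose m : ℝ)
            * (27 * ((4 * (m : ℝ) + 1) * (4 * m + 2) * (4 * m + 3) * (4 * m + 4))
              * Real.sqrt ((m : ℝ) + 2))
            / (((m : ℝ) + 1) * (3 * m + 1) * (3 * m + 2) * (3 * m + 3)) := by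
          rw [hC'eq]; ring
      _ ≤ ((4 * m).choose m : ℝ)
            * (256 * (((m : ℝ) + 1) * (3 * m + 1) * (3 * m + 2) * (3 * m + 3))
              * Real.sqrt ((m : ℝ) + 1))
            / (((m : ℝ) + 1) * (3 * m + 1) * (3 * m + 2) * (3 * m + 3)) := by
          gcongr
      _ = ((4 * m).choose m : ℝ) * Real.sqrt ((m : ℝ) + 1) * 256 := by
          field_simp
  have e1 : eseq (m + 1) = ((4 * (m + 1)).choose (m + 1) : ℝ) * Real.sqrt ((m : ℝ) + 2) * 27
      * ((27 / 256) ^ m / 256) := by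
    rw [eseq, show ((m + 1 : ℕ) : ℝ) + 1 = (m : ℝ) + 2 from by push_cast; ring, pow_succ]
    ring
  have e2 : eseq m = ((4 * m).choose m : ℝ) * Real.sqrt ((m : ℝ) + 1) * 256
      * ((27 / 256) ^ m / 256) := by
    rw [eseq]; ring
  rw [e1, e2]
  have hpos : (0 : ℝ) ≤ (27 / 256) ^ m / 256 := by positivity
  exact mul_le_mul_of_nonneg_right key hpos

lemma stirlingSeq_pos' {n : ℕ} (hn : 1 ≤ n) : 0 < stirlingSeq n := by
  obtain ⟨k, rfl⟩ : ∃ k, n = k + 1 := ⟨n - 1, by omega⟩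
  exact stirlingSeq'_pos k

lemma eseq_eq (m : ℕ) (hm : 1 ≤ m) :
    eseq m = stirlingSeq (4 * m) / (stirlingSeq m * stirlingSeq (3 * m))
      * (Real.sqrt (2 / 3) * Real.sqrt (((m : ℝ) + 1) / m)) := by
  have hx : (0 : ℝ) < (m : ℝ) := by exact_mod_cast hm
  have hs1 : 0 < stirlingSeq m := stirlingSeq_pos' hm
  have hs3 : 0 < stirlingSeq (3 * m) := stirlingSeq_pos' (by omega)
  have hs4 : 0 < stirlingSeq (4 * m) := stirlingSeq_pos' (by omega)
  have hCh : ((4 * m).choose m : ℝ) = (4 * m)! / (m ! * (3 * m)!) := by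
    rw [Nat.cast_choose ℝ (by omega : m ≤ 4 * m), show 4 * m - m = 3 * m from by omega]
  have key : eseq m * (stirlingSeq m * stirlingSeq (3 * m))
      = stirlingSeq (4 * m) * (Real.sqrt (2 / 3) * Real.sqrt (((m : ℝ) + 1) / m)) := by
    have hL : 0 ≤ eseq m * (stirlingSeq m * stirlingSeq (3 * m)) := by
      have : 0 ≤ eseq m := by rw [eseq]; positivity
      positivity
    have hR : 0 ≤ stirlingSeq (4 * m)
        * (Real.sqrt (2 / 3) * Real.sqrt (((m : ℝ) + 1) / m)) := by positivity
    have hsq : (eseq m * (stirlingSeq m * stirlingSeq (3 * m))) ^ 2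
        = (stirlingSeq (4 * m)
          * (Real.sqrt (2 / 3) * Real.sqrt (((m : ℝ) + 1) / m))) ^ 2 := by
      rw [eseq, stirlingSeq, stirlingSeq, stirlingSeq, hCh]
      push_cast
      have q1 : Real.sqrt ((m : ℝ) + 1) ^ 2 = (m : ℝ) + 1 := Real.sq_sqrt (by positivity)
      have q2 : Real.sqrt (2 * (m : ℝ)) ^ 2 = 2 * m := Real.sq_sqrt (by positivity)
      have q3 : Real.sqrt (2 * (3 * (m : ℝ))) ^ 2 = 2 * (3 * m) := Real.sq_sqrt (by positivity)
      have q4 : Real.sqrt (2 * (4 * (m : ℝ))) ^ 2 = 2 * (4 * m) := Real.sq_sqrt (by positivity)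
      have q5 : Real.sqrt ((2 : ℝ) / 3) ^ 2 = 2 / 3 := Real.sq_sqrt (by positivity)
      have q6 : Real.sqrt (((m : ℝ) + 1) / m) ^ 2 = ((m : ℝ) + 1) / m :=
        Real.sq_sqrt (by positivity)
      have hfm : (m ! : ℝ) ≠ 0 := by positivity
      have hf3 : ((3 * m)! : ℝ) ≠ 0 := by positivity
      have he : Real.exp 1 ≠ 0 := Real.exp_ne_zero 1
      have hq2 : Real.sqrt (2 * (m : ℝ)) ≠ 0 := by positivity
      have hq3 : Real.sqrt (2 * (3 * (m : ℝ))) ≠ 0 := by positivity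
      have hq4 : Real.sqrt (2 * (4 * (m : ℝ))) ≠ 0 := by positivity
      have hu : ((m : ℝ) / Real.exp 1) ^ m ≠ 0 := by positivity
      have hv : ((3 * (m : ℝ)) / Real.exp 1) ^ (3 * m) ≠ 0 := by positivity
      have hw : ((4 * (m : ℝ)) / Real.exp 1) ^ (4 * m) ≠ 0 := by positivity
      field_simp
      have r2 : (Real.sqrt 2) ^ 2 = 2 := Real.sq_sqrt (by norm_num)
      have r3 : (Real.sqrt 3) ^ 2 = 3 := Real.sq_sqrt (by norm_num)
      have r4 : (Real.sqrt 4) ^ 2 = 4 := Real.sq_sqrt (by norm_num)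
      have rm : (Real.sqrt (m : ℝ)) ^ 2 = (m : ℝ) := Real.sq_sqrt (by positivity)
      simp only [r2, r3, r4, rm, q1]
      have s1 : √((m : ℝ) * 2 * 4) ^ 2 = (m : ℝ) * 2 * 4 := Real.sq_sqrt (by positivity)
      have s2 : √((m : ℝ) * 2) ^ 2 = (m : ℝ) * 2 := Real.sq_sqrt (by positivity)
      have s3 : √((m : ℝ) * 2 * 3) ^ 2 = (m : ℝ) * 2 * 3 := Real.sq_sqrt (by positivity)
      have t4 : ((m : ℝ) * 4 / Real.exp 1) ^ (4 * m)
          = ((m : ℝ) ^ m) ^ 4 * 256 ^ m / (Real.exp 1 ^ m) ^ 4 := by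
        rw [div_pow, mul_pow, ← pow_mul, ← pow_mul, mul_comm m 4,
          show (4 : ℝ) ^ (4 * m) = 256 ^ m from by rw [pow_mul]; norm_num]
      have t3 : ((m : ℝ) * 3 / Real.exp 1) ^ (3 * m)
          = ((m : ℝ) ^ m) ^ 3 * 27 ^ m / (Real.exp 1 ^ m) ^ 3 := by
        rw [div_pow, mul_pow, ← pow_mul, ← pow_mul, mul_comm m 3,
          show (3 : ℝ) ^ (3 * m) = 27 ^ m from by rw [pow_mul]; norm_num]
      rw [s1, s2, s3, q5, q6, t4, t3]
      simp only [div_pow]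
      have hm0 : (m : ℝ) ≠ 0 := hx.ne'
      have he' : Real.exp 1 ^ m ≠ 0 := by positivity
      field_simp
      ring
    calc eseq m * (stirlingSeq m * stirlingSeq (3 * m))
        = Real.sqrt ((eseq m * (stirlingSeq m * stirlingSeq (3 * m))) ^ 2) :=
          (Real.sqrt_sq hL).symm
      _ = Real.sqrt ((stirlingSeq (4 * m)
          * (Real.sqrt (2 / 3) * Real.sqrt (((m : ℝ) + 1) / m))) ^ 2) := by rw [hsq]
      _ = _ := Real.sqrt_sq hR
  rw [div_mul_eq_mul_div, eq_div_iff (by positivity : stirlingSeq m * stirlingSeq (3 * m) ≠ 0)]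
  calc eseq m * (stirlingSeq m * stirlingSeq (3 * m))
      = stirlingSeq (4 * m) * (Real.sqrt (2 / 3) * Real.sqrt (((m : ℝ) + 1) / m)) := key
    _ = _ := by ring

lemma eseq_tendsto : Tendsto eseq atTop (𝓝 (Real.sqrt (2 / (3 * π)))) := by
  have hπ : (0 : ℝ) < Real.sqrt π := Real.sqrt_pos.mpr Real.pi_pos
  have h4 : Tendsto (fun m : ℕ => stirlingSeq (4 * m)) atTop (𝓝 (Real.sqrt π)) :=
    tendsto_stirlingSeq_sqrt_pi.comp
      (tendsto_atTop_mono (fun n => by omega : ∀ n : ℕ, n ≤ 4 * n) tendsto_id)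
  have h3 : Tendsto (fun m : ℕ => stirlingSeq (3 * m)) atTop (𝓝 (Real.sqrt π)) :=
    tendsto_stirlingSeq_sqrt_pi.comp
      (tendsto_atTop_mono (fun n => by omega : ∀ n : ℕ, n ≤ 3 * n) tendsto_id)
  have h1 : Tendsto (fun m : ℕ => stirlingSeq m) atTop (𝓝 (Real.sqrt π)) :=
    tendsto_stirlingSeq_sqrt_pi
  have hrat : Tendsto (fun m : ℕ => ((m : ℝ) + 1) / m) atTop (𝓝 1) := by
    have hbase : Tendsto (fun m : ℕ => 1 + 1 / (m : ℝ)) atTop (𝓝 1) := by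
      simpa using
        (tendsto_const_nhds (x := (1:ℝ)) (f := atTop (α := ℕ))).add
          tendsto_one_div_atTop_nhds_zero_nat
    apply hbase.congr'
    filter_upwards [eventually_ge_atTop 1] with m hm
    have : (m : ℝ) ≠ 0 := by
      have : (0 : ℝ) < m := by exact_mod_cast hm
      linarith
    field_simp
  have hsqrt : Tendsto (fun m : ℕ => Real.sqrt (((m : ℝ) + 1) / m)) atTop (𝓝 1) := by
    have h := (Real.continuous_sqrt.tendsto 1).comp hrat
    rw [Real.sqrt_one] at h
    exact h
  have hmain : Tendsto (fun m : ℕ => stirlingSeq (4 * m) / (stirlingSeq m * stirlingSeq (3 * m))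
      * (Real.sqrt (2 / 3) * Real.sqrt (((m : ℝ) + 1) / m))) atTop
      (𝓝 (Real.sqrt π / (Real.sqrt π * Real.sqrt π) * (Real.sqrt (2 / 3) * 1))) :=
    (h4.div (h1.mul h3) (by positivity)).mul (tendsto_const_nhds.mul hsqrt)
  have hval : Real.sqrt π / (Real.sqrt π * Real.sqrt π) * (Real.sqrt (2 / 3) * 1)
      = Real.sqrt (2 / (3 * π)) := by
    rw [show (2 : ℝ) / (3 * π) = (2 / 3) / π from by ring,
      Real.sqrt_div (by norm_num : (0:ℝ) ≤ 2 / 3)]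
    have hpp : Real.sqrt π * Real.sqrt π = π := Real.mul_self_sqrt Real.pi_pos.le
    field_simp
  rw [← hval]
  apply hmain.congr'
  filter_upwards [eventually_ge_atTop 1] with m hm
  exact (eseq_eq m hm).symm

lemma eseq_ge (m : ℕ) : Real.sqrt (2 / (3 * π)) ≤ eseq m := by
  have hant : Antitone eseq := antitone_nat_of_succ_le eseq_succ_le
  exact le_of_tendsto eseq_tendsto (eventually_atTop.2 ⟨m, fun n hn => hant hn⟩)

lemma choose_lower (m : ℕ) :
    Real.sqrt (2 / (3 * π)) / Real.sqrt ((m : ℝ) + 1) * (256 / 27) ^ m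
      ≤ ((4 * m).choose m : ℝ) := by
  have h := eseq_ge m
  rw [eseq] at h
  have hs : (0 : ℝ) < Real.sqrt ((m : ℝ) + 1) := Real.sqrt_pos.mpr (by positivity)
  have hq : (0 : ℝ) < (27 / 256 : ℝ) ^ m := by positivity
  rw [div_mul_eq_mul_div, div_le_iff₀ hs]
  calc Real.sqrt (2 / (3 * π)) * (256 / 27) ^ m
      ≤ ((4 * m).choose m : ℝ) * Real.sqrt ((m : ℝ) + 1) * (27 / 256) ^ m * (256 / 27) ^ m := by
        gcongr
    _ = ((4 * m).choose m : ℝ) * Real.sqrt ((m : ℝ) + 1)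
        * ((27 / 256) * (256 / 27)) ^ m := by rw [mul_pow]; ring
    _ = ((4 * m).choose m : ℝ) * Real.sqrt ((m : ℝ) + 1) := by norm_num


lemma one_lt_zetaR (s : ℕ) (hs : 2 ≤ s) : 1 < zetaR s := by
  rw [zetaR]; exact one_lt_zetaR' s hs

/-- the lower bound
`V1(g) > √(2/(3πg))·(8/3)^(4g-4)·(1 - 2/(6g-7))` for all `g ≥ 2`. -/
theorem stmt19 (a : ℕ → ℕ → ℚ) (ha : ∀ g : ℕ, 1 ≤ g → IsCorr g (a g))
    (g : ℕ) (hg : 2 ≤ g) :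
    Real.sqrt (2 / (3 * π * g)) * (8 / 3) ^ (4 * g - 4) * (1 - 2 / (6 * (g : ℝ) - 7))
      < V1 a g := by
  obtain ⟨m, rfl⟩ : ∃ m, g = m + 1 := ⟨g - 1, by omega⟩
  have hm : 1 ≤ m := by omega
  have hmr : (1 : ℝ) ≤ (m : ℝ) := by exact_mod_cast hm
  -- normalize the indices
  rw [V1]
  simp only [show 4 * (m + 1) - 4 = 4 * m from by omega,
    show m + 1 - 1 = m from by omega,
    show 3 * (m + 1) - 3 = 3 * m from by omega,
    show 6 * (m + 1) - 6 = 2 * (3 * m) from by omega,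
    show 2 * (m + 1) - 2 = 2 * m from by omega]
  rw [show ((m + 1 : ℕ) : ℝ) = (m : ℝ) + 1 from by push_cast; ring,
    show 6 * ((m : ℝ) + 1) - 7 = 6 * (m : ℝ) - 1 from by ring]
  set β : ℝ := 1 - 2 / (6 * (m : ℝ) - 1) with hβ
  have h6m : (5 : ℝ) ≤ 6 * (m : ℝ) - 1 := by linarith
  have hβpos : 0 < β := by
    rw [hβ, sub_pos, div_lt_one (by linarith)]
    linarith
  -- lower bound on the correlators
  have hak : ∀ k, k < 3 * m → β ≤ ((a m k : ℚ) : ℝ) := by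
    intro k hk
    have hq := corr_lower m hm (a m) (ha m hm) k (by omega)
    have := (Rat.cast_le (K := ℝ)).mpr hq
    push_cast at this
    rw [hβ]
    convert this using 2
  -- lower bound on the sum
  have hsum : β * 2 ^ (2 * (3 * m) - 1)
      ≤ ∑ k ∈ Finset.range (3 * m), ((2 * (3 * m)).choose (2 * k + 1) : ℝ) * ((a m k : ℚ) : ℝ) := by
    calc β * 2 ^ (2 * (3 * m) - 1)
        = ∑ k ∈ Finset.range (3 * m), β * ((2 * (3 * m)).choose (2 * k + 1) : ℝ) := by
          rw [← Finset.mul_sum, odd_choose_sum (3 * m) (by omega)]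
      _ ≤ ∑ k ∈ Finset.range (3 * m),
            ((2 * (3 * m)).choose (2 * k + 1) : ℝ) * ((a m k : ℚ) : ℝ) := by
          apply Finset.sum_le_sum
          intro k hk
          rw [mul_comm]
          exact mul_le_mul_of_nonneg_left (hak k (Finset.mem_range.mp hk)) (Nat.cast_nonneg _)
  set Sv : ℝ := ∑ k ∈ Finset.range (3 * m),
    ((2 * (3 * m)).choose (2 * k + 1) : ℝ) * ((a m k : ℚ) : ℝ) with hSv
  set Ch : ℝ := ((4 * m).choose m : ℝ) with hCh
  have hChpos : (0 : ℝ) < Ch := by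
    rw [hCh]; exact_mod_cast Nat.choose_pos (by omega : m ≤ 4 * m)
  have hpow : ((8 : ℝ) / 3) ^ (4 * m) = (256 / 27) ^ m * (16 / 3) ^ m := by
    rw [pow_mul, ← mul_pow]
    norm_num
  have hT_eq : Real.sqrt (2 / (3 * π * ((m : ℝ) + 1)))
      = Real.sqrt (2 / (3 * π)) / Real.sqrt ((m : ℝ) + 1) := by
    rw [show (2 : ℝ) / (3 * π * ((m : ℝ) + 1)) = (2 / (3 * π)) / ((m : ℝ) + 1) from by
        have hπ := Real.pi_pos
        field_simp,
      Real.sqrt_div (by positivity)]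
  have hPid : (2 / ((3 : ℝ) ^ m * 2 ^ (2 * m))) * 2 ^ (2 * (3 * m) - 1) = (16 / 3) ^ m := by
    have h2 : (2 : ℝ) * 2 ^ (2 * (3 * m) - 1) = 2 ^ (6 * m) := by
      rw [show 6 * m = (2 * (3 * m) - 1) + 1 from by omega, pow_succ]
      ring
    have a1 : (2 : ℝ) ^ (6 * m) = 64 ^ m := by rw [pow_mul]; norm_num
    have a2 : (2 : ℝ) ^ (2 * m) = 4 ^ m := by rw [pow_mul]; norm_num
    rw [div_mul_eq_mul_div, h2, a1, a2, div_pow, div_eq_div_iff (by positivity) (by positivity),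
      ← mul_pow, ← mul_pow, ← mul_pow]
    norm_num
  have hX : Real.sqrt (2 / (3 * π * ((m : ℝ) + 1))) * (8 / 3) ^ (4 * m) * β
      ≤ Ch * (2 / ((3 : ℝ) ^ m * 2 ^ (2 * m))) * Sv := by
    calc Real.sqrt (2 / (3 * π * ((m : ℝ) + 1))) * (8 / 3) ^ (4 * m) * β
        = (Real.sqrt (2 / (3 * π)) / Real.sqrt ((m : ℝ) + 1) * (256 / 27) ^ m)
            * ((16 / 3) ^ m * β) := by rw [hT_eq, hpow]; ring
      _ ≤ Ch * ((16 / 3) ^ m * β) := by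
          apply mul_le_mul_of_nonneg_right (choose_lower m)
          positivity
      _ = Ch * (2 / ((3 : ℝ) ^ m * 2 ^ (2 * m))) * (β * 2 ^ (2 * (3 * m) - 1)) := by
          rw [← hPid]; ring
      _ ≤ Ch * (2 / ((3 : ℝ) ^ m * 2 ^ (2 * m))) * Sv := by
          apply mul_le_mul_of_nonneg_left hsum
          positivity
  have hz : 1 < zetaR (2 * (3 * m)) := one_lt_zetaR _ (by omega)
  have hTpos : 0 < Real.sqrt (2 / (3 * π * ((m : ℝ) + 1))) * (8 / 3) ^ (4 * m) * β := by
    have hπ := Real.pi_pos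
    positivity
  calc Real.sqrt (2 / (3 * π * ((m : ℝ) + 1))) * (8 / 3) ^ (4 * m) * β
      ≤ Ch * (2 / ((3 : ℝ) ^ m * 2 ^ (2 * m))) * Sv := hX
    _ < zetaR (2 * (3 * m)) * (Ch * (2 / ((3 : ℝ) ^ m * 2 ^ (2 * m))) * Sv) :=
        lt_mul_of_one_lt_left (lt_of_lt_of_le hTpos hX) hz
    _ = zetaR (2 * (3 * m)) * Ch * (2 / ((3 : ℝ) ^ m * 2 ^ (2 * m))) * Sv := by ring
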